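/- There do not exist vectors w_0, …, w_8 ∈ ℝ² and reals h_0, …, h_8 such that (w_0,…,w_8) is an admissible extended-Gale configuration for C_6(9) and the intersection heights satisfy the chain of strict inequalities z_{458} < z_{258} < z_{238} < z_{278} < z_{478} < z_{078} < z_{058} < z_{038} < z_{018} < z_{014} < z_{012} < z_{016} < z_{036} < z_{034} < z_{345} < z_{234} < z_{347} < z_{147} < z_{127} < z_{167} < z_{678} < z_{367} < z_{567} < z_{056} < z_{456} < z_{256} < z_{236} < z_{123} < z_{125} < z_{145}. (This is the nonrealizability of the Hamilton HK AOF orientation NR_1^6 of the graph of C_6(9)^Δ.) -/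

import Mathlib

noncomputable section

/-- For `v = (x, y) ∈ ℝ²`, `u · v^⊥ = det(u, v)` where `v^⊥ = (y, -x)`. -/
def dperp (u v : ℝ × ℝ) : ℝ := u.1 * v.2 - u.2 * v.1

/-- `[p q r]`: the determinant of the 3×3 matrix with columns `(pₓ,p_y,1)`, `(qₓ,q_y,1)`,
`(rₓ,r_y,1)`. -/
def tdet (p q r : ℝ × ℝ) : ℝ :=
  p.1 * (q.2 - r.2) - q.1 * (p.2 - r.2) + r.1 * (p.2 - q.2)

/-- The intersection height
`z(u,h_u; v,h_v; w,h_w) = ((u·v^⊥)·h_w + (w·u^⊥)·h_v + (v·w^⊥)·h_u) / [u v w]`. -/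
def iheight (u v w : ℝ × ℝ) (hu hv hw : ℝ) : ℝ :=
  (dperp u v * hw + dperp w u * hv + dperp v w * hu) / tdet u v w

/-- The 30 vertex triples of `C₆(9)^Δ`: complements in `{0,…,8}` of the facets of the
cyclic polytope `C₆(9)` given by Gale's evenness criterion. -/
def C69triples : Set (Fin 9 × Fin 9 × Fin 9) :=
  {(0, 1, 2), (0, 1, 4), (0, 1, 6), (0, 1, 8), (0, 3, 4), (0, 3, 6), (0, 3, 8), (0, 5, 6), (0, 5, 8), (0, 7, 8), (1, 2, 3), (1, 2, 5), (1, 2, 7), (1, 4, 5), (1, 4, 7), (1, 6, 7), (2, 3, 4), (2, 3, 6), (2, 3, 8), (2, 5, 6), (2, 5, 8), (2, 7, 8), (3, 4, 5), (3, 4, 7), (3, 6, 7), (4, 5, 6), (4, 5, 8), (4, 7, 8), (5, 6, 7), (6, 7, 8)}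

/-- `(w₀, …, w₈)` is an admissible extended-Gale configuration for `C₆(9)`: the `w_a` are
positive multiples of unit vectors in clockwise radial order `0, 2, 4, 6, 8, 1, 3, 5, 7`
around the origin, a 3-element subset `{i < j < k}` of `{0,…,8}` has `0` in the interior
of `conv {wᵢ, wⱼ, w_k}` iff it is one of the 30 vertex triples, and each vertex triple
has `[wᵢ wⱼ w_k] > 0`. -/
def AdmissibleC69 (w : Fin 9 → ℝ × ℝ) : Prop :=
  (∃ θ r : Fin 9 → ℝ,
    (∀ a : Fin 9, 0 < r a ∧ w a = (r a * Real.cos (θ a), r a * Real.sin (θ a))) ∧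
    θ 0 > θ 2 ∧ θ 2 > θ 4 ∧ θ 4 > θ 6 ∧ θ 6 > θ 8 ∧ θ 8 > θ 1 ∧ θ 1 > θ 3 ∧ θ 3 > θ 5 ∧
    θ 5 > θ 7 ∧ θ 7 > θ 0 - 2 * Real.pi) ∧
  (∀ i j k : Fin 9, i < j → j < k →
    ((0 : ℝ × ℝ) ∈ interior (convexHull ℝ {w i, w j, w k}) ↔ (i, j, k) ∈ C69triples)) ∧
  (∀ i j k : Fin 9, (i, j, k) ∈ C69triples → 0 < tdet (w i) (w j) (w k))

/-- The intersection height `z_{ijk}` determined by the configuration `w` and the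
lifting heights `h`. -/
def zC69 (w : Fin 9 → ℝ × ℝ) (h : Fin 9 → ℝ) (i j k : Fin 9) : ℝ :=
  iheight (w i) (w j) (w k) (h i) (h j) (h k)


open Topology Filter in
private lemma convex_halfplane_NR16 (α β γ : ℝ) :
    Convex ℝ {x : ℝ × ℝ | 0 ≤ α * x.1 + β * x.2 + γ} := by
  intro x hx y hy a b ha hb hab
  simp only [Set.mem_setOf_eq] at hx hy ⊢
  have hfst : (a • x + b • y).1 = a * x.1 + b * y.1 := rfl
  have hsnd : (a • x + b • y).2 = a * x.2 + b * y.2 := rfl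
  rw [hfst, hsnd]
  have key : α * (a * x.1 + b * y.1) + β * (a * x.2 + b * y.2) + γ
      = a * (α * x.1 + β * x.2 + γ) + b * (α * y.1 + β * y.2 + γ) := by
    linear_combination (-γ) * hab
  rw [key]
  have := mul_nonneg ha hx
  have := mul_nonneg hb hy
  linarith

open Topology Filter in
private lemma baryc (p q r : ℝ × ℝ) (h0 : (0:ℝ×ℝ) ∈ interior (convexHull ℝ {p, q, r}))
    (hD : 0 < tdet p q r) : 0 < dperp q r := by
  have hsub : convexHull ℝ {p, q, r} ⊆
      {x : ℝ × ℝ | 0 ≤ (q.2 - r.2) * x.1 + (r.1 - q.1) * x.2 + dperp q r} := by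
    apply convexHull_min _ (convex_halfplane_NR16 _ _ _)
    intro x hx
    simp only [Set.mem_insert_iff, Set.mem_singleton_iff] at hx
    simp only [Set.mem_setOf_eq]
    rcases hx with h | h | h <;> rw [h]
    · have e : (q.2 - r.2) * p.1 + (r.1 - q.1) * p.2 + dperp q r = tdet p q r := by
        simp only [dperp, tdet]; ring
      rw [e]; exact le_of_lt hD
    · have e : (q.2 - r.2) * q.1 + (r.1 - q.1) * q.2 + dperp q r = 0 := by
        simp only [dperp]; ring
      exact le_of_eq e.symm
    · have e : (q.2 - r.2) * r.1 + (r.1 - q.1) * r.2 + dperp q r = 0 := by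
        simp only [dperp]; ring
      exact le_of_eq e.symm
  have h0m : (0:ℝ×ℝ) ∈ convexHull ℝ {p, q, r} := interior_subset h0
  have hg0 : 0 ≤ dperp q r := by simpa using hsub h0m
  rcases eq_or_lt_of_le hg0 with h | h
  · exfalso
    have hT : 0 < (q.2 - r.2) * p.1 + (r.1 - q.1) * p.2 := by
      have e : (q.2 - r.2) * p.1 + (r.1 - q.1) * p.2 + dperp q r = tdet p q r := by
        simp only [dperp, tdet]; ring
      linarith [e, hD, h]
    have hcont : Continuous fun s : ℝ => s • p := by continuity
    have hev : ∀ᶠ s in 𝓝 (0:ℝ), s • p ∈ interior (convexHull ℝ {p, q, r}) := by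
      apply hcont.continuousAt.eventually_mem
      apply isOpen_interior.mem_nhds
      simpa using h0
    have hev' : ∀ᶠ s in 𝓝[<] (0:ℝ), s • p ∈ interior (convexHull ℝ {p, q, r}) :=
      hev.filter_mono nhdsWithin_le_nhds
    obtain ⟨s, hsp, hslt⟩ := (hev'.and self_mem_nhdsWithin).exists
    have hmem := hsub (interior_subset hsp)
    simp only [Set.mem_setOf_eq] at hmem
    have hc1 : (s • p).1 = s * p.1 := rfl
    have hc2 : (s • p).2 = s * p.2 := rfl
    rw [hc1, hc2, ← h] at hmem
    have hs0 : s < 0 := hslt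
    nlinarith [mul_neg_of_neg_of_pos hs0 hT]
  · exact h

private lemma set_rot_NR16 (p q r : ℝ × ℝ) : ({q, r, p} : Set (ℝ × ℝ)) = {p, q, r} := by
  ext x; simp only [Set.mem_insert_iff, Set.mem_singleton_iff]; tauto

private lemma tdet_rot_NR16 (p q r : ℝ × ℝ) : tdet q r p = tdet p q r := by
  simp only [tdet]; ring

private lemma baryc3 (p q r : ℝ × ℝ) (h0 : (0:ℝ×ℝ) ∈ interior (convexHull ℝ {p, q, r}))
    (hD : 0 < tdet p q r) : 0 < dperp q r ∧ 0 < dperp r p ∧ 0 < dperp p q := by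
  refine ⟨baryc p q r h0 hD, ?_, ?_⟩
  · exact baryc q r p (by rw [set_rot_NR16]; exact h0) (by rw [tdet_rot_NR16]; exact hD)
  · exact baryc r p q (by rw [set_rot_NR16, set_rot_NR16]; exact h0)
      (by rw [tdet_rot_NR16, tdet_rot_NR16]; exact hD)

/-- The 4×4 determinant of the lifted points `(w p, 1, h p)`, `(w q, 1, h q)`,
`(w r, 1, h r)`, `(w s, 1, h s)` (Laplace expansion along the last column). -/
private def E4 (w : Fin 9 → ℝ × ℝ) (h : Fin 9 → ℝ) (p q r s : Fin 9) : ℝ :=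
  tdet (w q) (w r) (w s) * h p - tdet (w p) (w r) (w s) * h q
    + tdet (w p) (w q) (w s) * h r - tdet (w p) (w q) (w r) * h s



private lemma iheight_rot (u v w : ℝ × ℝ) (hu hv hw : ℝ) :
    iheight u v w hu hv hw = iheight v w u hv hw hu := by
  simp only [iheight, dperp, tdet]
  congr 1 <;> ring

private lemma keyU (a b c d : ℝ × ℝ) (ha hb hc hd : ℝ)
    (n1 : tdet a b c ≠ 0) (n2 : tdet a b d ≠ 0) :
    (iheight a b d ha hb hd - iheight a b c ha hb hc) * (tdet a b c * tdet a b d)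
      = -(dperp a b * (tdet b c d * ha - tdet a c d * hb + tdet a b d * hc - tdet a b c * hd)) := by
  simp only [iheight]
  field_simp
  simp only [dperp, tdet]
  ring

set_option maxHeartbeats 4000000 in
/-- **Nonrealizability of the Hamilton HK AOF orientation `NR₁⁶` of the graph of
`C₆(9)^Δ`**: no admissible extended-Gale configuration for `C₆(9)` with lifting heights
realizes the vertex ordering
`458 < 258 < 238 < 278 < 478 < 078 < 058 < 038 < 018 < 014 < 012 < 016 < 036 < 034 < 345 < 234 < 347 < 147 < 127 < 167 < 678 < 367 < 567 < 056 < 456 < 256 < 236 < 123 < 125 < 145`. -/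
theorem NR16_not_realizable :
    ¬ ∃ (w : Fin 9 → ℝ × ℝ) (h : Fin 9 → ℝ),
      AdmissibleC69 w ∧
      (zC69 w h 4 5 8 < zC69 w h 2 5 8 ∧
       zC69 w h 2 5 8 < zC69 w h 2 3 8 ∧
       zC69 w h 2 3 8 < zC69 w h 2 7 8 ∧
       zC69 w h 2 7 8 < zC69 w h 4 7 8 ∧
       zC69 w h 4 7 8 < zC69 w h 0 7 8 ∧
       zC69 w h 0 7 8 < zC69 w h 0 5 8 ∧
       zC69 w h 0 5 8 < zC69 w h 0 3 8 ∧
       zC69 w h 0 3 8 < zC69 w h 0 1 8 ∧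
       zC69 w h 0 1 8 < zC69 w h 0 1 4 ∧
       zC69 w h 0 1 4 < zC69 w h 0 1 2 ∧
       zC69 w h 0 1 2 < zC69 w h 0 1 6 ∧
       zC69 w h 0 1 6 < zC69 w h 0 3 6 ∧
       zC69 w h 0 3 6 < zC69 w h 0 3 4 ∧
       zC69 w h 0 3 4 < zC69 w h 3 4 5 ∧
       zC69 w h 3 4 5 < zC69 w h 2 3 4 ∧
       zC69 w h 2 3 4 < zC69 w h 3 4 7 ∧
       zC69 w h 3 4 7 < zC69 w h 1 4 7 ∧
       zC69 w h 1 4 7 < zC69 w h 1 2 7 ∧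
       zC69 w h 1 2 7 < zC69 w h 1 6 7 ∧
       zC69 w h 1 6 7 < zC69 w h 6 7 8 ∧
       zC69 w h 6 7 8 < zC69 w h 3 6 7 ∧
       zC69 w h 3 6 7 < zC69 w h 5 6 7 ∧
       zC69 w h 5 6 7 < zC69 w h 0 5 6 ∧
       zC69 w h 0 5 6 < zC69 w h 4 5 6 ∧
       zC69 w h 4 5 6 < zC69 w h 2 5 6 ∧
       zC69 w h 2 5 6 < zC69 w h 2 3 6 ∧
       zC69 w h 2 3 6 < zC69 w h 1 2 3 ∧
       zC69 w h 1 2 3 < zC69 w h 1 2 5 ∧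
       zC69 w h 1 2 5 < zC69 w h 1 4 5) := by
  rintro ⟨w, h, ⟨⟨-, hint, hDp⟩, hz⟩⟩
  obtain ⟨z1, z2, z3, z4, z5, z6, z7, z8, z9, z10, z11, z12, z13, z14, z15, z16, z17, z18, z19, z20, z21, z22, z23, z24, z25, z26, z27, z28, z29⟩ := hz
  have hD012 : 0 < tdet (w 0) (w 1) (w 2) := hDp 0 1 2 (by simp [C69triples])
  have hD016 : 0 < tdet (w 0) (w 1) (w 6) := hDp 0 1 6 (by simp [C69triples])
  have hD018 : 0 < tdet (w 0) (w 1) (w 8) := hDp 0 1 8 (by simp [C69triples])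
  have hD123 : 0 < tdet (w 1) (w 2) (w 3) := hDp 1 2 3 (by simp [C69triples])
  have hD127 : 0 < tdet (w 1) (w 2) (w 7) := hDp 1 2 7 (by simp [C69triples])
  have hD167 : 0 < tdet (w 1) (w 6) (w 7) := hDp 1 6 7 (by simp [C69triples])
  have hD236 : 0 < tdet (w 2) (w 3) (w 6) := hDp 2 3 6 (by simp [C69triples])
  have hD238 : 0 < tdet (w 2) (w 3) (w 8) := hDp 2 3 8 (by simp [C69triples])
  have hD678 : 0 < tdet (w 6) (w 7) (w 8) := hDp 6 7 8 (by simp [C69triples])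
  have hI012 := (hint 0 1 2 (by decide) (by decide)).mpr (by simp [C69triples])
  have hI678 := (hint 6 7 8 (by decide) (by decide)).mpr (by simp [C69triples])
  have hI167 := (hint 1 6 7 (by decide) (by decide)).mpr (by simp [C69triples])
  have hI123 := (hint 1 2 3 (by decide) (by decide)).mpr (by simp [C69triples])
  have hI127 := (hint 1 2 7 (by decide) (by decide)).mpr (by simp [C69triples])
  have d01 : 0 < dperp (w 0) (w 1) := (baryc3 (w 0) (w 1) (w 2) hI012 hD012).2.2
  have d67 : 0 < dperp (w 6) (w 7) := (baryc3 (w 6) (w 7) (w 8) hI678 hD678).2.2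
  have d16 : 0 < dperp (w 1) (w 6) := (baryc3 (w 1) (w 6) (w 7) hI167 hD167).2.2
  have d12 : 0 < dperp (w 1) (w 2) := (baryc3 (w 1) (w 2) (w 3) hI123 hD123).2.2
  have d23 : 0 < dperp (w 2) (w 3) := (baryc3 (w 1) (w 2) (w 3) hI123 hD123).1
  have d71 : 0 < dperp (w 7) (w 1) := (baryc3 (w 1) (w 2) (w 7) hI127 hD127).2.1
  have hza := z11
  have hzb := z20
  have hzc : zC69 w h 0 1 6 < zC69 w h 1 6 7 := by linarith [z12, z13, z14, z15, z16, z17, z18, z19]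
  have hzd : zC69 w h 0 1 2 < zC69 w h 1 2 3 := by linarith [z11, z12, z13, z14, z15, z16, z17, z18, z19, z20, z21, z22, z23, z24, z25, z26, z27]
  have hze : zC69 w h 2 3 8 < zC69 w h 1 2 3 := by linarith [z3, z4, z5, z6, z7, z8, z9, z10, z11, z12, z13, z14, z15, z16, z17, z18, z19, z20, z21, z22, z23, z24, z25, z26, z27]
  have hzf : zC69 w h 0 1 8 < zC69 w h 0 1 2 := by linarith [z9, z10]
  have hzg := z27
  have hzh : zC69 w h 0 1 8 < zC69 w h 0 1 6 := by linarith [z9, z10, z11]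
  have hzi := z19
  have eae0126 : iheight (w 0) (w 1) (w 6) (h 0) (h 1) (h 6) = zC69 w h 0 1 6 := by rfl
  have ebe0126 : iheight (w 0) (w 1) (w 2) (h 0) (h 1) (h 2) = zC69 w h 0 1 2 := by rfl
  have ece0126 : tdet (w 1) (w 2) (w 6) * h 0 - tdet (w 0) (w 2) (w 6) * h 1 + tdet (w 0) (w 1) (w 6) * h 2 - tdet (w 0) (w 1) (w 2) * h 6 = E4 w h 0 1 2 6 := by rfl
  have ke0126 := keyU (w 0) (w 1) (w 2) (w 6) (h 0) (h 1) (h 2) (h 6) (ne_of_gt hD012) (ne_of_gt hD016)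
  rw [eae0126, ebe0126, ece0126] at ke0126
  have Pe0126 : 0 < -(dperp (w 0) (w 1) * (E4 w h 0 1 2 6)) := by
    rw [← ke0126]
    exact mul_pos (sub_pos.mpr hza) (mul_pos hD012 hD016)
  have e0126 : E4 w h 0 1 2 6 < 0 := by
    by_contra hx
    push_neg at hx
    have hm : 0 ≤ dperp (w 0) (w 1) * (E4 w h 0 1 2 6) := mul_nonneg (le_of_lt d01) hx
    linarith [Pe0126, hm]
  have eae1678 : iheight (w 6) (w 7) (w 8) (h 6) (h 7) (h 8) = zC69 w h 6 7 8 := by rfl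
  have ebe1678 : iheight (w 6) (w 7) (w 1) (h 6) (h 7) (h 1) = zC69 w h 1 6 7 := by simp only [zC69]; rw [iheight_rot, iheight_rot]
  have ece1678 : tdet (w 7) (w 1) (w 8) * h 6 - tdet (w 6) (w 1) (w 8) * h 7 + tdet (w 6) (w 7) (w 8) * h 1 - tdet (w 6) (w 7) (w 1) * h 8 = E4 w h 1 6 7 8 := by simp only [E4, tdet]; ring
  have ke1678 := keyU (w 6) (w 7) (w 1) (w 8) (h 6) (h 7) (h 1) (h 8) (by rw [show tdet (w 6) (w 7) (w 1) = tdet (w 1) (w 6) (w 7) from by simp only [tdet]; ring]; exact ne_of_gt hD167) (ne_of_gt hD678)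
  rw [eae1678, ebe1678, ece1678] at ke1678
  rw [show tdet (w 6) (w 7) (w 1) = tdet (w 1) (w 6) (w 7) from by simp only [tdet]; ring] at ke1678
  have Pe1678 : 0 < -(dperp (w 6) (w 7) * (E4 w h 1 6 7 8)) := by
    rw [← ke1678]
    exact mul_pos (sub_pos.mpr hzb) (mul_pos hD167 hD678)
  have e1678 : E4 w h 1 6 7 8 < 0 := by
    by_contra hx
    push_neg at hx
    have hm : 0 ≤ dperp (w 6) (w 7) * (E4 w h 1 6 7 8) := mul_nonneg (le_of_lt d67) hx
    linarith [Pe1678, hm]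
  have eae0167 : iheight (w 1) (w 6) (w 7) (h 1) (h 6) (h 7) = zC69 w h 1 6 7 := by rfl
  have ebe0167 : iheight (w 1) (w 6) (w 0) (h 1) (h 6) (h 0) = zC69 w h 0 1 6 := by simp only [zC69]; rw [iheight_rot, iheight_rot]
  have ece0167 : tdet (w 6) (w 0) (w 7) * h 1 - tdet (w 1) (w 0) (w 7) * h 6 + tdet (w 1) (w 6) (w 7) * h 0 - tdet (w 1) (w 6) (w 0) * h 7 = E4 w h 0 1 6 7 := by simp only [E4, tdet]; ring
  have ke0167 := keyU (w 1) (w 6) (w 0) (w 7) (h 1) (h 6) (h 0) (h 7) (by rw [show tdet (w 1) (w 6) (w 0) = tdet (w 0) (w 1) (w 6) from by simp only [tdet]; ring]; exact ne_of_gt hD016) (ne_of_gt hD167)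
  rw [eae0167, ebe0167, ece0167] at ke0167
  rw [show tdet (w 1) (w 6) (w 0) = tdet (w 0) (w 1) (w 6) from by simp only [tdet]; ring] at ke0167
  have Pe0167 : 0 < -(dperp (w 1) (w 6) * (E4 w h 0 1 6 7)) := by
    rw [← ke0167]
    exact mul_pos (sub_pos.mpr hzc) (mul_pos hD016 hD167)
  have e0167 : E4 w h 0 1 6 7 < 0 := by
    by_contra hx
    push_neg at hx
    have hm : 0 ≤ dperp (w 1) (w 6) * (E4 w h 0 1 6 7) := mul_nonneg (le_of_lt d16) hx
    linarith [Pe0167, hm]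
  have eae0123 : iheight (w 1) (w 2) (w 3) (h 1) (h 2) (h 3) = zC69 w h 1 2 3 := by rfl
  have ebe0123 : iheight (w 1) (w 2) (w 0) (h 1) (h 2) (h 0) = zC69 w h 0 1 2 := by simp only [zC69]; rw [iheight_rot, iheight_rot]
  have ece0123 : tdet (w 2) (w 0) (w 3) * h 1 - tdet (w 1) (w 0) (w 3) * h 2 + tdet (w 1) (w 2) (w 3) * h 0 - tdet (w 1) (w 2) (w 0) * h 3 = E4 w h 0 1 2 3 := by simp only [E4, tdet]; ring
  have ke0123 := keyU (w 1) (w 2) (w 0) (w 3) (h 1) (h 2) (h 0) (h 3) (by rw [show tdet (w 1) (w 2) (w 0) = tdet (w 0) (w 1) (w 2) from by simp only [tdet]; ring]; exact ne_of_gt hD012) (ne_of_gt hD123)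
  rw [eae0123, ebe0123, ece0123] at ke0123
  rw [show tdet (w 1) (w 2) (w 0) = tdet (w 0) (w 1) (w 2) from by simp only [tdet]; ring] at ke0123
  have Pe0123 : 0 < -(dperp (w 1) (w 2) * (E4 w h 0 1 2 3)) := by
    rw [← ke0123]
    exact mul_pos (sub_pos.mpr hzd) (mul_pos hD012 hD123)
  have e0123 : E4 w h 0 1 2 3 < 0 := by
    by_contra hx
    push_neg at hx
    have hm : 0 ≤ dperp (w 1) (w 2) * (E4 w h 0 1 2 3) := mul_nonneg (le_of_lt d12) hx
    linarith [Pe0123, hm]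
  have eae1238 : iheight (w 2) (w 3) (w 1) (h 2) (h 3) (h 1) = zC69 w h 1 2 3 := by simp only [zC69]; rw [iheight_rot, iheight_rot]
  have ebe1238 : iheight (w 2) (w 3) (w 8) (h 2) (h 3) (h 8) = zC69 w h 2 3 8 := by rfl
  have ece1238 : tdet (w 3) (w 8) (w 1) * h 2 - tdet (w 2) (w 8) (w 1) * h 3 + tdet (w 2) (w 3) (w 1) * h 8 - tdet (w 2) (w 3) (w 8) * h 1 = (-1 : ℝ) * E4 w h 1 2 3 8 := by simp only [E4, tdet]; ring
  have ke1238 := keyU (w 2) (w 3) (w 8) (w 1) (h 2) (h 3) (h 8) (h 1) (ne_of_gt hD238) (by rw [show tdet (w 2) (w 3) (w 1) = tdet (w 1) (w 2) (w 3) from by simp only [tdet]; ring]; exact ne_of_gt hD123)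
  rw [eae1238, ebe1238, ece1238] at ke1238
  rw [show tdet (w 2) (w 3) (w 1) = tdet (w 1) (w 2) (w 3) from by simp only [tdet]; ring] at ke1238
  have Pe1238 : 0 < -(dperp (w 2) (w 3) * ((-1 : ℝ) * E4 w h 1 2 3 8)) := by
    rw [← ke1238]
    exact mul_pos (sub_pos.mpr hze) (mul_pos hD238 hD123)
  have e1238 : 0 < E4 w h 1 2 3 8 := by
    by_contra hx
    push_neg at hx
    have hm : 0 ≤ dperp (w 2) (w 3) * -(E4 w h 1 2 3 8) := mul_nonneg (le_of_lt d23) (neg_nonneg.mpr hx)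
    linarith [Pe1238, hm]
  have eae0128 : iheight (w 0) (w 1) (w 2) (h 0) (h 1) (h 2) = zC69 w h 0 1 2 := by rfl
  have ebe0128 : iheight (w 0) (w 1) (w 8) (h 0) (h 1) (h 8) = zC69 w h 0 1 8 := by rfl
  have ece0128 : tdet (w 1) (w 8) (w 2) * h 0 - tdet (w 0) (w 8) (w 2) * h 1 + tdet (w 0) (w 1) (w 2) * h 8 - tdet (w 0) (w 1) (w 8) * h 2 = (-1 : ℝ) * E4 w h 0 1 2 8 := by simp only [E4, tdet]; ring
  have ke0128 := keyU (w 0) (w 1) (w 8) (w 2) (h 0) (h 1) (h 8) (h 2) (ne_of_gt hD018) (ne_of_gt hD012)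
  rw [eae0128, ebe0128, ece0128] at ke0128
  have Pe0128 : 0 < -(dperp (w 0) (w 1) * ((-1 : ℝ) * E4 w h 0 1 2 8)) := by
    rw [← ke0128]
    exact mul_pos (sub_pos.mpr hzf) (mul_pos hD018 hD012)
  have e0128 : 0 < E4 w h 0 1 2 8 := by
    by_contra hx
    push_neg at hx
    have hm : 0 ≤ dperp (w 0) (w 1) * -(E4 w h 0 1 2 8) := mul_nonneg (le_of_lt d01) (neg_nonneg.mpr hx)
    linarith [Pe0128, hm]
  have eae1236 : iheight (w 2) (w 3) (w 1) (h 2) (h 3) (h 1) = zC69 w h 1 2 3 := by simp only [zC69]; rw [iheight_rot, iheight_rot]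
  have ebe1236 : iheight (w 2) (w 3) (w 6) (h 2) (h 3) (h 6) = zC69 w h 2 3 6 := by rfl
  have ece1236 : tdet (w 3) (w 6) (w 1) * h 2 - tdet (w 2) (w 6) (w 1) * h 3 + tdet (w 2) (w 3) (w 1) * h 6 - tdet (w 2) (w 3) (w 6) * h 1 = (-1 : ℝ) * E4 w h 1 2 3 6 := by simp only [E4, tdet]; ring
  have ke1236 := keyU (w 2) (w 3) (w 6) (w 1) (h 2) (h 3) (h 6) (h 1) (ne_of_gt hD236) (by rw [show tdet (w 2) (w 3) (w 1) = tdet (w 1) (w 2) (w 3) from by simp only [tdet]; ring]; exact ne_of_gt hD123)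
  rw [eae1236, ebe1236, ece1236] at ke1236
  rw [show tdet (w 2) (w 3) (w 1) = tdet (w 1) (w 2) (w 3) from by simp only [tdet]; ring] at ke1236
  have Pe1236 : 0 < -(dperp (w 2) (w 3) * ((-1 : ℝ) * E4 w h 1 2 3 6)) := by
    rw [← ke1236]
    exact mul_pos (sub_pos.mpr hzg) (mul_pos hD236 hD123)
  have e1236 : 0 < E4 w h 1 2 3 6 := by
    by_contra hx
    push_neg at hx
    have hm : 0 ≤ dperp (w 2) (w 3) * -(E4 w h 1 2 3 6) := mul_nonneg (le_of_lt d23) (neg_nonneg.mpr hx)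
    linarith [Pe1236, hm]
  have eae0168 : iheight (w 0) (w 1) (w 6) (h 0) (h 1) (h 6) = zC69 w h 0 1 6 := by rfl
  have ebe0168 : iheight (w 0) (w 1) (w 8) (h 0) (h 1) (h 8) = zC69 w h 0 1 8 := by rfl
  have ece0168 : tdet (w 1) (w 8) (w 6) * h 0 - tdet (w 0) (w 8) (w 6) * h 1 + tdet (w 0) (w 1) (w 6) * h 8 - tdet (w 0) (w 1) (w 8) * h 6 = (-1 : ℝ) * E4 w h 0 1 6 8 := by simp only [E4, tdet]; ring
  have ke0168 := keyU (w 0) (w 1) (w 8) (w 6) (h 0) (h 1) (h 8) (h 6) (ne_of_gt hD018) (ne_of_gt hD016)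
  rw [eae0168, ebe0168, ece0168] at ke0168
  have Pe0168 : 0 < -(dperp (w 0) (w 1) * ((-1 : ℝ) * E4 w h 0 1 6 8)) := by
    rw [← ke0168]
    exact mul_pos (sub_pos.mpr hzh) (mul_pos hD018 hD016)
  have e0168 : 0 < E4 w h 0 1 6 8 := by
    by_contra hx
    push_neg at hx
    have hm : 0 ≤ dperp (w 0) (w 1) * -(E4 w h 0 1 6 8) := mul_nonneg (le_of_lt d01) (neg_nonneg.mpr hx)
    linarith [Pe0168, hm]
  have eae1267 : iheight (w 7) (w 1) (w 6) (h 7) (h 1) (h 6) = zC69 w h 1 6 7 := by simp only [zC69]; rw [iheight_rot]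
  have ebe1267 : iheight (w 7) (w 1) (w 2) (h 7) (h 1) (h 2) = zC69 w h 1 2 7 := by simp only [zC69]; rw [iheight_rot]
  have ece1267 : tdet (w 1) (w 2) (w 6) * h 7 - tdet (w 7) (w 2) (w 6) * h 1 + tdet (w 7) (w 1) (w 6) * h 2 - tdet (w 7) (w 1) (w 2) * h 6 = (-1 : ℝ) * E4 w h 1 2 6 7 := by simp only [E4, tdet]; ring
  have ke1267 := keyU (w 7) (w 1) (w 2) (w 6) (h 7) (h 1) (h 2) (h 6) (by rw [show tdet (w 7) (w 1) (w 2) = tdet (w 1) (w 2) (w 7) from by simp only [tdet]; ring]; exact ne_of_gt hD127) (by rw [show tdet (w 7) (w 1) (w 6) = tdet (w 1) (w 6) (w 7) from by simp only [tdet]; ring]; exact ne_of_gt hD167)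
  rw [eae1267, ebe1267, ece1267] at ke1267
  rw [show tdet (w 7) (w 1) (w 2) = tdet (w 1) (w 2) (w 7) from by simp only [tdet]; ring] at ke1267
  rw [show tdet (w 7) (w 1) (w 6) = tdet (w 1) (w 6) (w 7) from by simp only [tdet]; ring] at ke1267
  have Pe1267 : 0 < -(dperp (w 7) (w 1) * ((-1 : ℝ) * E4 w h 1 2 6 7)) := by
    rw [← ke1267]
    exact mul_pos (sub_pos.mpr hzi) (mul_pos hD127 hD167)
  have e1267 : 0 < E4 w h 1 2 6 7 := by
    by_contra hx
    push_neg at hx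
    have hm : 0 ≤ dperp (w 7) (w 1) * -(E4 w h 1 2 6 7) := mul_nonneg (le_of_lt d71) (neg_nonneg.mpr hx)
    linarith [Pe1267, hm]
  have gp0 : E4 w h 0 1 2 3 * E4 w h 1 2 6 8 - E4 w h 0 1 2 6 * E4 w h 1 2 3 8 + E4 w h 0 1 2 8 * E4 w h 1 2 3 6 = 0 := by
    simp only [E4, tdet]; ring
  have e1268 : 0 < E4 w h 1 2 6 8 := by
    by_contra hx
    push_neg at hx
    have h1 : 0 ≤ (-(E4 w h 0 1 2 3)) * (-(E4 w h 1 2 6 8)) := mul_nonneg (by linarith) (by linarith)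
    have h1' : (-(E4 w h 0 1 2 3)) * (-(E4 w h 1 2 6 8)) = E4 w h 0 1 2 3 * E4 w h 1 2 6 8 := by ring
    rw [h1'] at h1
    have h2 : E4 w h 0 1 2 6 * E4 w h 1 2 3 8 < 0 := mul_neg_of_neg_of_pos e0126 e1238
    have h3 : 0 < E4 w h 0 1 2 8 * E4 w h 1 2 3 6 := mul_pos e0128 e1236
    linarith [gp0]
  have gp1 : -(E4 w h 0 1 2 6 * E4 w h 1 6 7 8) + E4 w h 0 1 6 7 * E4 w h 1 2 6 8 - E4 w h 0 1 6 8 * E4 w h 1 2 6 7 = 0 := by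
    simp only [E4, tdet]; ring
  have t1 : 0 < E4 w h 0 1 2 6 * E4 w h 1 6 7 8 := mul_pos_of_neg_of_neg e0126 e1678
  have t2 : E4 w h 0 1 6 7 * E4 w h 1 2 6 8 < 0 := mul_neg_of_neg_of_pos e0167 e1268
  have t3 : 0 < E4 w h 0 1 6 8 * E4 w h 1 2 6 7 := mul_pos e0168 e1267
  linarith [gp1, t1, t2, t3]
end
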